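/- Let m ≥ 2 be squarefree, k ≥ 2, and let R ⊆ {0,…,m−1} be a set such that differences of distinct elements of R are never k-th powers modulo m. Fix Y ∈ ℕ and let A be the set of integers of the form Σ_{0 ≤ i < Y} uᵢ mⁱ where uᵢ ∈ R whenever k ∣ i and uᵢ ∈ {0,…,m−1} otherwise. Then for all u, v ∈ A and all integers x, u − v = x^k implies x = 0. -/
import Mathlib

lemma key_nat (m n k j c : ℕ) (hm : 2 ≤ m) (hsf : Squarefree m) (hk : 1 ≤ k)
    (hn : n ≠ 0) (h : m ^ j ∣ n ^ k) (hc : k * c < j + k) : m ^ c ∣ n := by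
  have hm0 : m ≠ 0 := by omega
  rw [← Nat.factorization_le_iff_dvd (pow_ne_zero _ hm0) hn]
  intro p
  rw [Nat.factorization_pow]
  simp only [Finsupp.coe_smul, Pi.smul_apply, smul_eq_mul]
  rcases Nat.eq_zero_or_pos (m.factorization p) with h0 | h1
  · simp [h0]
  · have h1' : m.factorization p = 1 :=
      le_antisymm (hsf.natFactorization_le_one p) h1
    have hdvd := (Nat.factorization_le_iff_dvd (pow_ne_zero _ hm0) (pow_ne_zero _ hn)).mpr h p
    rw [Nat.factorization_pow, Nat.factorization_pow] at hdvd
    simp only [Finsupp.coe_smul, Pi.smul_apply, smul_eq_mul, h1', mul_one] at hdvd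
    have : c ≤ n.factorization p := by nlinarith
    rw [h1', mul_one]; exact this

lemma key_int (m k j c : ℕ) (x : ℤ) (hm : 2 ≤ m) (hsf : Squarefree m) (hk : 1 ≤ k)
    (hx : x ≠ 0) (h : (m:ℤ) ^ j ∣ x ^ k) (hc : k * c < j + k) : (m:ℤ) ^ c ∣ x := by
  have hn : x.natAbs ≠ 0 := by simpa using hx
  have h' : m ^ j ∣ x.natAbs ^ k := by
    rw [← Int.natAbs_pow]
    exact Int.natCast_dvd_natCast.mp (by simpa using (Int.dvd_natAbs.mpr h))
  have := key_nat m x.natAbs k j c hm hsf hk hn h' hc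
  calc (m:ℤ) ^ c = ((m ^ c : ℕ) : ℤ) := by push_cast; ring
    _ ∣ (x.natAbs : ℤ) := Int.natCast_dvd_natCast.mpr this
    _ ∣ x := Int.natAbs_dvd.mpr dvd_rfl

theorem stmt_15 (m k : ℕ) (hm : 2 ≤ m) (hsf : Squarefree m) (hk : 2 ≤ k)
    (R : Finset ℕ) (hR : R ⊆ Finset.range m)
    (hRdiff : ∀ r ∈ R, ∀ r' ∈ R, r ≠ r' → ∀ x : ℤ,
      ((r : ℤ) - (r' : ℤ) ≡ x ^ k [ZMOD (m : ℤ)]) → (m : ℤ) ∣ x)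
    (Y : ℕ) (u v : ℕ → ℕ)
    (hu : ∀ i < Y, u i < m ∧ (k ∣ i → u i ∈ R))
    (hv : ∀ i < Y, v i < m ∧ (k ∣ i → v i ∈ R)) :
    ∀ x : ℤ,
      (∑ i ∈ Finset.range Y, (u i : ℤ) * (m : ℤ) ^ i) -
        (∑ i ∈ Finset.range Y, (v i : ℤ) * (m : ℤ) ^ i) = x ^ k → x = 0 := by
  classical
  intro x hx
  by_contra hx0
  set d : ℕ → ℤ := fun i => (u i : ℤ) - v i with hd
  have hS : ∑ i ∈ Finset.range Y, d i * (m:ℤ)^i = x ^ k := by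
    rw [← hx, ← Finset.sum_sub_distrib]
    exact Finset.sum_congr rfl fun i _ => by simp [hd]; ring
  have hP : ∃ j, j < Y ∧ u j ≠ v j := by
    by_contra h
    push_neg at h
    apply hx0
    have hzero : x ^ k = 0 := by
      rw [← hS]
      apply Finset.sum_eq_zero
      intro i hi
      have := h i (Finset.mem_range.mp hi)
      simp [hd, this]
    exact pow_eq_zero_iff (by omega) |>.mp hzero
  set j := Nat.find hP with hjdef
  obtain ⟨hjY, hjne⟩ := Nat.find_spec hP
  have hmin : ∀ i < j, u i = v i := by
    intro i hi
    have h := Nat.find_min hP hi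
    push_neg at h
    exact h (lt_trans hi hjY)
  -- split the sum
  set D : ℤ := ∑ i ∈ Finset.range (Y - j), d (j + i) * (m:ℤ)^i with hD
  have hSD : x ^ k = (m:ℤ)^j * D := by
    rw [← hS, ← Finset.sum_range_add_sum_Ico _ (le_of_lt hjY)]
    have h1 : ∑ i ∈ Finset.range j, d i * (m:ℤ)^i = 0 := by
      apply Finset.sum_eq_zero
      intro i hi
      have := hmin i (Finset.mem_range.mp hi)
      simp [hd, this]
    rw [h1, zero_add, Finset.sum_Ico_eq_sum_range, hD, Finset.mul_sum]
    exact Finset.sum_congr rfl fun i _ => by rw [pow_add]; ring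
  have hmne : (m:ℤ) ≠ 0 := by positivity
  have hmjne : (m:ℤ)^j ≠ 0 := pow_ne_zero _ hmne
  -- D ≡ d j mod m
  have hDmod : (m:ℤ) ∣ D - d j := by
    have hYj : Y - j = (Y - j - 1) + 1 := by omega
    rw [hD, hYj, Finset.sum_range_succ']
    simp only [pow_zero, mul_one, add_zero]
    rw [add_sub_cancel_right]
    apply Finset.dvd_sum
    intro i hi
    exact Dvd.dvd.mul_left (dvd_pow_self (m:ℤ) (Nat.succ_ne_zero i)) _
  -- facts about d j
  have huj : u j < m := (hu j hjY).1
  have hvj : v j < m := (hv j hjY).1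
  have hdjne : d j ≠ 0 := by
    simp only [hd, sub_ne_zero]
    exact_mod_cast hjne
  have hnotdvd : ¬ (m:ℤ) ∣ d j := by
    intro hdvd
    have habs : |d j| < m := by
      rw [abs_lt]
      constructor <;> simp only [hd] <;> push_cast <;> omega
    exact hdjne (Int.eq_zero_of_abs_lt_dvd hdvd habs)
  by_cases hkj : k ∣ j
  · -- j = k * q
    obtain ⟨q, hq⟩ := hkj
    have hdvdx : (m:ℤ)^q ∣ x := by
      apply key_int m k j q x hm hsf (by omega) hx0 _ (by omega)
      rw [hSD]
      exact Dvd.intro _ rfl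
    obtain ⟨y, hy⟩ := hdvdx
    have hyk : y ^ k = D := by
      apply mul_left_cancel₀ hmjne
      rw [← hSD, hy, mul_pow, ← pow_mul, Nat.mul_comm q k, ← hq]
    have hmem_u : u j ∈ R := (hu j hjY).2 ⟨q, hq⟩
    have hmem_v : v j ∈ R := (hv j hjY).2 ⟨q, hq⟩
    have hmy : (m:ℤ) ∣ y := by
      apply hRdiff (u j) hmem_u (v j) hmem_v hjne y
      rw [Int.modEq_iff_dvd]
      show (m:ℤ) ∣ y ^ k - ((u j : ℤ) - (v j : ℤ))
      rw [hyk]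
      exact hDmod
    have : (m:ℤ) ∣ D := by
      rw [← hyk]
      exact dvd_pow hmy (by omega)
    exact hnotdvd (by
      have := dvd_sub this hDmod
      simpa using this)
  · -- ¬ k ∣ j
    have hmod := Nat.div_add_mod j k
    have hmodne : j % k ≠ 0 := fun h => hkj (Nat.dvd_of_mod_eq_zero h)
    have hmodlt : j % k < k := Nat.mod_lt _ (by omega)
    have hexp : k * (j / k + 1) = k * (j / k) + k := by ring
    have hexp2 : (j / k + 1) * k = k * (j / k) + k := by ring
    have hdvdx : (m:ℤ)^(j/k + 1) ∣ x := by
      apply key_int m k j (j/k + 1) x hm hsf (by omega) hx0 _ (by omega)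
      rw [hSD]
      exact Dvd.intro _ rfl
    have h2 : (m:ℤ)^(j+1) ∣ x ^ k := by
      have := pow_dvd_pow_of_dvd hdvdx k
      rw [← pow_mul] at this
      exact dvd_trans (pow_dvd_pow _ (by omega)) this
    have hmD : (m:ℤ) ∣ D := by
      rw [hSD, pow_succ] at h2
      have := (mul_dvd_mul_iff_left hmjne).mp h2
      exact this
    exact hnotdvd (by
      have := dvd_sub hmD hDmod
      simpa using this)
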